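/- Let p be a prime, let G and H be finitely generated groups, let m ∈ ℕ, and let C ∈ ℕ be a constant. Assume that for every subgroup U₁ ≤ G of index p^k with k ≤ m one has d(U₁) ≤ C·k + d(G), and that for every subgroup U₂ ≤ H of index p^ℓ with ℓ ≤ m one has d(U₂) ≤ C·ℓ + d(H). Then every subgroup U of the direct product G × H of index (G × H : U) = p^m satisfies d(U) ≤ C·m + d(G) + d(H). -/

import Mathlib

open Filter Topology
open scoped commutatorElement

/-- `ngen G` is the minimal number of generators `d(G)` of a group `G`. -/
noncomputable def ngen (G : Type*) [Group G] : ℕ :=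
  sInf {n | ∃ S : Finset G, S.card = n ∧ Subgroup.closure (S : Set G) = ⊤}

/-- `phiP p G` is `Φ_p(G)`, the subgroup of `G` generated by all commutators
and all `p`-th powers. -/
def phiP (p : ℕ) (G : Type*) [Group G] : Subgroup G :=
  Subgroup.normalClosure ({x | ∃ a b : G, x = ⁅a, b⁆} ∪ {x | ∃ g : G, x = g ^ p})

instance phiP_normal (p : ℕ) (G : Type*) [Group G] : (phiP p G).Normal :=
  Subgroup.normalClosure_normal

/-- `dp p G = d_p(G)`, the minimal number of generators of `G/Φ_p(G)`. -/
noncomputable def dp (p : ℕ) (G : Type*) [Group G] : ℕ := ngen (G ⧸ phiP p G)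

/-- `subCount G n = s_n(G)`, the number of (finite-index) subgroups of `G`
of index at most `n`. -/
noncomputable def subCount (G : Type*) [Group G] (n : ℕ) : ℕ :=
  Nat.card {H : Subgroup G // 0 < H.index ∧ H.index ≤ n}

/-- `dpMax p G m = d_p(m)`, the maximum of `d_p(U)` over subgroups `U ≤ G`
of index exactly `p^m`. -/
noncomputable def dpMax (p : ℕ) (G : Type*) [Group G] (m : ℕ) : ℕ :=
  sSup {d | ∃ U : Subgroup G, U.index = p ^ m ∧ d = dp p ↥U}

section Aux

variable {G H : Type*} [Group G] [Group H]

/-- A finitely generated group has a generating finset of size `ngen`. -/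
lemma ngen_witness (Γ : Type*) [Group Γ] [Group.FG Γ] :
    ∃ S : Finset Γ, S.card = ngen Γ ∧ Subgroup.closure (S : Set Γ) = ⊤ := by
  have hne : {n | ∃ S : Finset Γ, S.card = n ∧ Subgroup.closure (S : Set Γ) = ⊤}.Nonempty := by
    obtain ⟨S, _, h2⟩ := Group.rank_spec Γ
    exact ⟨S.card, S, rfl, h2⟩
  exact Nat.sInf_mem hne

lemma ngen_le {Γ : Type*} [Group Γ] {S : Finset Γ}
    (h : Subgroup.closure (S : Set Γ) = ⊤) : ngen Γ ≤ S.card :=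
  Nat.sInf_le ⟨S, rfl, h⟩

instance fg_prod [Group.FG G] [Group.FG H] : Group.FG (G × H) := by
  obtain ⟨S, _, hS⟩ := Group.rank_spec G
  obtain ⟨T, _, hT⟩ := Group.rank_spec H
  rw [Group.fg_iff]
  refine ⟨(MonoidHom.inl G H) '' S ∪ (MonoidHom.inr G H) '' T, ?_,
    ((S : Set G).toFinite.image _).union ((T : Set H).toFinite.image _)⟩
  set W := Subgroup.closure ((MonoidHom.inl G H) '' S ∪ (MonoidHom.inr G H) '' T)
  have h1 : Subgroup.closure ((MonoidHom.inl G H) '' S) ≤ W :=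
    Subgroup.closure_mono Set.subset_union_left
  have h2 : Subgroup.closure ((MonoidHom.inr G H) '' T) ≤ W :=
    Subgroup.closure_mono Set.subset_union_right
  rw [← MonoidHom.map_closure, hS] at h1
  rw [← MonoidHom.map_closure, hT] at h2
  rw [eq_top_iff]
  rintro ⟨g, h⟩ -
  have hg : ((g, 1) : G × H) ∈ W := h1 ⟨g, trivial, rfl⟩
  have hh : ((1, h) : G × H) ∈ W := h2 ⟨h, trivial, rfl⟩
  have : ((g, 1) : G × H) * (1, h) = (g, h) := by simp
  rw [← this]
  exact W.mul_mem hg hh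

/-- The relative index of `U` in `π₁(U) × H` is the index of `U ∩ H` in `H`. -/
lemma relindex_prod_eq (U : Subgroup (G × H)) :
    U.relIndex ((U.map (MonoidHom.fst G H)).prod ⊤) =
      (U.comap (MonoidHom.inr G H)).index := by
  set P := U.map (MonoidHom.fst G H) with hP
  set K := U.comap (MonoidHom.inr G H) with hK
  set V := P.prod (⊤ : Subgroup H) with hV
  have hmem : ∀ h : H, ((1 : G), h) ∈ V := fun h => ⟨P.one_mem, trivial⟩
  -- the map from H ⧸ K to V ⧸ (U.subgroupOf V)
  let f : H ⧸ K → ↥V ⧸ U.subgroupOf V :=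
    Quotient.map' (fun h => (⟨((1 : G), h), hmem h⟩ : ↥V))
      (by
        intro a b hab
        rw [QuotientGroup.leftRel_apply] at hab ⊢
        rw [Subgroup.mem_subgroupOf]
        show ((1 : G), a)⁻¹ * ((1 : G), b) ∈ U
        have : ((1 : G), a)⁻¹ * ((1 : G), b) = ((1 : G), a⁻¹ * b) := by simp
        rw [this]
        exact hab)
  have hbij : Function.Bijective f := by
    constructor
    · intro x y
      refine Quotient.inductionOn₂' x y ?_
      intro a b hfab
      have : (⟨((1 : G), a), hmem a⟩ : ↥V)⁻¹ * ⟨((1 : G), b), hmem b⟩ ∈ U.subgroupOf V := by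
        rwa [← QuotientGroup.eq]
      rw [Subgroup.mem_subgroupOf] at this
      have h2 : ((1 : G), a⁻¹ * b) ∈ U := by
        have he : (((1 : G), a) : G × H)⁻¹ * ((1 : G), b) = ((1 : G), a⁻¹ * b) := by simp
        rw [← he]; exact this
      apply Quotient.sound'
      rw [QuotientGroup.leftRel_apply]
      exact h2
    · intro x
      refine Quotient.inductionOn' x ?_
      rintro ⟨⟨g, h⟩, hgP, -⟩
      obtain ⟨u, huU, hu1⟩ := Subgroup.mem_map.mp hgP
      refine ⟨QuotientGroup.mk (h * u.2⁻¹), ?_⟩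
      show Quotient.map' _ _ (QuotientGroup.mk (h * u.2⁻¹)) = _
      apply Quotient.sound'
      rw [QuotientGroup.leftRel_apply, Subgroup.mem_subgroupOf]
      show (((1 : G), h * u.2⁻¹) : G × H)⁻¹ * (g, h) ∈ U
      have he : (((1 : G), h * u.2⁻¹) : G × H)⁻¹ * (g, h) = (g, u.2 * h⁻¹ * h) := by
        simp [mul_assoc]
      rw [he]
      have : ((g, u.2 * h⁻¹ * h) : G × H) = u := by
        rw [Prod.ext_iff]
        constructor
        · exact hu1.symm
        · simp
      rw [this]
      exact huU
  have := Nat.card_congr (Equiv.ofBijective f hbij)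
  unfold Subgroup.relIndex Subgroup.index
  exact this.symm

lemma index_comap_inr (U : Subgroup (G × H)) :
    (U.comap (MonoidHom.inr G H)).index * (U.map (MonoidHom.fst G H)).index = U.index := by
  set P := U.map (MonoidHom.fst G H) with hP
  have hle : U ≤ P.prod ⊤ := by
    rintro ⟨g, h⟩ hu
    exact ⟨⟨(g, h), hu, rfl⟩, trivial⟩
  have h1 : (P.prod (⊤ : Subgroup H)).index = P.index := by
    rw [Subgroup.index_prod, Subgroup.index_top, mul_one]
  rw [← relindex_prod_eq U, ← h1]
  exact Subgroup.relIndex_mul_index hle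

end Aux

theorem generators_of_subgroup_of_direct_product
    (p : ℕ) (hp : p.Prime) (G H : Type*) [Group G] [Group H]
    [Group.FG G] [Group.FG H] (m C : ℕ)
    (hG : ∀ k : ℕ, k ≤ m → ∀ U₁ : Subgroup G, U₁.index = p ^ k →
      ngen ↥U₁ ≤ C * k + ngen G)
    (hH : ∀ l : ℕ, l ≤ m → ∀ U₂ : Subgroup H, U₂.index = p ^ l →
      ngen ↥U₂ ≤ C * l + ngen H)
    (U : Subgroup (G × H)) (hU : U.index = p ^ m) :
    ngen ↥U ≤ C * m + ngen G + ngen H := by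
  classical
  set P := U.map (MonoidHom.fst G H) with hPdef
  set K := U.comap (MonoidHom.inr G H) with hKdef
  have hmul : K.index * P.index = p ^ m := by rw [index_comap_inr U]; exact hU
  obtain ⟨l, hl, hKl⟩ := (Nat.dvd_prime_pow hp).mp (Dvd.intro _ hmul)
  obtain ⟨k, hk, hPk⟩ := (Nat.dvd_prime_pow hp).mp (Dvd.intro_left _ hmul)
  have hlk : l + k = m := by
    have : p ^ (l + k) = p ^ m := by rw [pow_add, ← hKl, ← hPk, hmul]
    exact Nat.pow_right_injective hp.two_le this
  haveI : K.FiniteIndex := ⟨by rw [hKl]; exact pow_ne_zero _ hp.ne_zero⟩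
  haveI : P.FiniteIndex := ⟨by rw [hPk]; exact pow_ne_zero _ hp.ne_zero⟩
  haveI : Group.FG ↥K := Subgroup.fg_of_index_ne_zero K
  haveI : Group.FG ↥P := Subgroup.fg_of_index_ne_zero P
  obtain ⟨S, hScard, hSgen⟩ := ngen_witness ↥P
  obtain ⟨T, hTcard, hTgen⟩ := ngen_witness ↥K
  -- lifts of S into U
  choose φ hφU hφ1 using fun s : ↥P => Subgroup.mem_map.mp s.2
  let φ' : ↥P → ↥U := fun s => ⟨φ s, hφU s⟩
  let ψ' : ↥K → ↥U := fun t => ⟨((1 : G), (t : H)), t.2⟩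
  let A : Finset ↥U := S.image φ' ∪ T.image ψ'
  set W := Subgroup.closure (U.subtype '' (A : Set ↥U)) with hWdef
  have hWU : W ≤ U := (Subgroup.closure_le U).mpr (by rintro x ⟨a, -, rfl⟩; exact a.2)
  have hPW : P ≤ W.map (MonoidHom.fst G H) := by
    have hPc : P = Subgroup.closure (P.subtype '' (S : Set ↥P)) := by
      rw [← MonoidHom.map_closure, hSgen, ← MonoidHom.range_eq_map, P.range_subtype]
    rw [hPc]
    apply (Subgroup.closure_le _).mpr
    rintro x ⟨s, hsS, rfl⟩
    refine ⟨φ s, ?_, hφ1 s⟩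
    apply Subgroup.subset_closure
    exact ⟨φ' s, Finset.mem_union_left _ (Finset.mem_image_of_mem φ' hsS), rfl⟩
  have hKW : K ≤ W.comap (MonoidHom.inr G H) := by
    have hKc : K = Subgroup.closure (K.subtype '' (T : Set ↥K)) := by
      rw [← MonoidHom.map_closure, hTgen, ← MonoidHom.range_eq_map, K.range_subtype]
    rw [hKc]
    apply (Subgroup.closure_le _).mpr
    rintro x ⟨t, htT, rfl⟩
    show (MonoidHom.inr G H) (t : H) ∈ W
    apply Subgroup.subset_closure
    exact ⟨ψ' t, Finset.mem_union_right _ (Finset.mem_image_of_mem ψ' htT), rfl⟩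
  have hUW : U ≤ W := by
    rintro ⟨g, h⟩ hu
    have hgP : g ∈ P := ⟨(g, h), hu, rfl⟩
    obtain ⟨w, hwW, hwfst⟩ := hPW hgP
    have hw1 : w.1 = g := hwfst
    have hwU : w ∈ U := hWU hwW
    have hk' : h * w.2⁻¹ ∈ K := by
      show (MonoidHom.inr G H) (h * w.2⁻¹) ∈ U
      have : (MonoidHom.inr G H) (h * w.2⁻¹) = (g, h) * w⁻¹ := by
        rw [Prod.ext_iff]
        constructor
        · show (1 : G) = g * w.1⁻¹
          rw [hw1]; simp
        · rfl
      rw [this]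
      exact U.mul_mem hu (U.inv_mem hwU)
    have h1W : ((1 : G), h * w.2⁻¹) ∈ W := hKW hk'
    have he : (((1 : G), h * w.2⁻¹) : G × H) * w = (g, h) := by
      rw [Prod.ext_iff]
      constructor
      · show 1 * w.1 = g
        rw [hw1]; simp
      · show h * w.2⁻¹ * w.2 = h
        simp
    rw [← he]
    exact W.mul_mem h1W hwW
  have hclos : Subgroup.closure (A : Set ↥U) = ⊤ := by
    apply Subgroup.map_injective U.subtype_injective
    rw [MonoidHom.map_closure, ← hWdef, ← MonoidHom.range_eq_map, U.range_subtype]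
    exact le_antisymm hWU hUW
  have hbound := ngen_le hclos
  have hcard : A.card ≤ S.card + T.card :=
    (Finset.card_union_le _ _).trans (add_le_add Finset.card_image_le Finset.card_image_le)
  have hP' := hG k hk P hPk
  have hK' := hH l hl K hKl
  calc ngen ↥U ≤ A.card := hbound
    _ ≤ S.card + T.card := hcard
    _ = ngen ↥P + ngen ↥K := by rw [hScard, hTcard]
    _ ≤ (C * k + ngen G) + (C * l + ngen H) := add_le_add hP' hK'
    _ = C * m + ngen G + ngen H := by rw [← hlk, mul_add]; ring
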